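/- The characteristic polynomial of the matrix B(ξ) is det(νI − B(ξ)) = (ν − iκ|ξ|²)(ν² − κ₁(ξ))(ν² − κ₂(ξ)) − νγ²|ξ|²a₁²(η)(ν² − κ₂(ξ)) − νγ²|ξ|²a₂²(η)(ν² − κ₁(ξ)), where κ_j(ξ) = |ξ|²κ_j(η). -/

import Mathlib

set_option maxHeartbeats 4000000


open Matrix Complex

/-- The characteristic polynomial of `B(ξ)`:
`det(νI − B) = (ν − iκ|ξ|²)(ν² − κ₁(ξ))(ν² − κ₂(ξ))
  − νγ²|ξ|²a₁²(η)(ν² − κ₂(ξ)) − νγ²|ξ|²a₂²(η)(ν² − κ₁(ξ))`. -/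
theorem charpolyB
    (κ γ : ℝ) (hκ : 0 < κ) (hγ : γ ≠ 0)
    (κ₁ κ₂ : ℝ) (hκ₁ : 0 < κ₁) (hκ₂ : 0 < κ₂)
    (a₁η a₂η : ℝ) (ha : a₁η ^ 2 + a₂η ^ 2 = 1)
    (R : ℝ) (hR : 0 < R)
    (ω₁ ω₂ a₁ a₂ : ℝ)
    (hω₁ : ω₁ = R * Real.sqrt κ₁) (hω₂ : ω₂ = R * Real.sqrt κ₂)
    (ha₁ : a₁ = R * a₁η) (ha₂ : a₂ = R * a₂η)
    (B : Matrix (Fin 5) (Fin 5) ℂ)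
    (hB : B = !![(ω₁ : ℂ), 0, 0, 0, I * γ * a₁;
                 0, (ω₂ : ℂ), 0, 0, I * γ * a₂;
                 0, 0, (-ω₁ : ℂ), 0, I * γ * a₁;
                 0, 0, 0, (-ω₂ : ℂ), I * γ * a₂;
                 -(I * γ / 2) * a₁, -(I * γ / 2) * a₂,
                 -(I * γ / 2) * a₁, -(I * γ / 2) * a₂, I * κ * R ^ 2])
    (ν : ℂ) :
    (ν • (1 : Matrix (Fin 5) (Fin 5) ℂ) - B).det =
      (ν - I * κ * R ^ 2) * (ν ^ 2 - R ^ 2 * κ₁) * (ν ^ 2 - R ^ 2 * κ₂)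
        - ν * γ ^ 2 * R ^ 2 * a₁η ^ 2 * (ν ^ 2 - R ^ 2 * κ₂)
        - ν * γ ^ 2 * R ^ 2 * a₂η ^ 2 * (ν ^ 2 - R ^ 2 * κ₁) := by
  have hsq₁ : (ω₁ : ℂ) ^ 2 = (R : ℂ) ^ 2 * (κ₁ : ℂ) := by
    rw [hω₁]
    push_cast
    rw [mul_pow, sq (Real.sqrt κ₁ : ℂ)]
    norm_cast
    rw [Real.mul_self_sqrt hκ₁.le]
  have hsq₂ : (ω₂ : ℂ) ^ 2 = (R : ℂ) ^ 2 * (κ₂ : ℂ) := by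
    rw [hω₂]
    push_cast
    rw [mul_pow, sq (Real.sqrt κ₂ : ℂ)]
    norm_cast
    rw [Real.mul_self_sqrt hκ₂.le]
  subst ha₁ ha₂
  have hM : ν • (1 : Matrix (Fin 5) (Fin 5) ℂ) - B =
      !![ν - (ω₁ : ℂ), 0, 0, 0, -(I * γ * (R * a₁η));
         0, ν - (ω₂ : ℂ), 0, 0, -(I * γ * (R * a₂η));
         0, 0, ν + (ω₁ : ℂ), 0, -(I * γ * (R * a₁η));
         0, 0, 0, ν + (ω₂ : ℂ), -(I * γ * (R * a₂η));
         I * γ / 2 * (R * a₁η), I * γ / 2 * (R * a₂η),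
         I * γ / 2 * (R * a₁η), I * γ / 2 * (R * a₂η), ν - I * κ * R ^ 2] := by
    subst hB
    ext i j
    fin_cases i <;> fin_cases j <;>
      simp [Matrix.one_apply] <;> ring
  rw [hM]
  simp [Matrix.det_succ_row_zero, Fin.sum_univ_succ, Fin.succAbove, Fin.castSucc, Fin.castAdd, Fin.castLE, Fin.succ, Matrix.cons_val_two, Matrix.cons_val_three, Matrix.cons_val_four, Matrix.vecTail, Matrix.vecHead]
  have h3 : (⟨((3 : Fin 4) : ℕ), by omega⟩ : Fin 5) = 3 := by decide
  try simp only [h3, Matrix.cons_val_three, Matrix.vecHead, Matrix.vecTail, Function.comp,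
    Matrix.cons_val_zero, Matrix.cons_val_succ]
  push_cast
  rw [← hsq₁, ← hsq₂]
  ring_nf
  simp only [Complex.I_sq]
  ring
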